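/- For all m≥1, the sequence c defined by c(0)=0 and c(m)=2·2^m−1+Σ_{k=1}^{m-1}c(k)·C(m+1,m−k) satisfies the closed form c(m)=Σ_{k=0}^{m-1}(2·2^{m−k}−1)·C(m+1,k)·B_k, where B_k is the k-th ordered Bell number (Fubini number). -/

import Mathlib

lemma key_choose (m i j : ℕ) (hij : i < j) (hjm : j < m) :
    (m + 1).choose (m - j + i) * (m - j + i).choose i
      = (j + 1).choose i * (m + 1).choose (m - j) := by
  have h1 : (m - j + i) ≤ m + 1 := by omega
  have h2 : i ≤ m - j + i := by omega
  rw [Nat.choose_mul h2]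
  have h3 : j + 1 ≤ m + 1 := by omega
  have h4 : i ≤ j + 1 := by omega
  have h5 : (m + 1).choose (m - j) = (m + 1).choose (j + 1) := by
    rw [← Nat.choose_symm h3]; congr 1; omega
  rw [h5, mul_comm ((j+1).choose i), Nat.choose_mul h4]
  congr 1
  rw [show m - j + i - i = m - j by omega,
    ← Nat.choose_symm (show j + 1 - i ≤ m + 1 - i by omega)]
  congr 1; omega

theorem c_closed_form (c B : ℕ → ℤ)
    (hB0 : B 0 = 1)
    (hB : ∀ n, 1 ≤ n → B n = ∑ k ∈ Finset.Icc 1 n, (n.choose k : ℤ) * B (n - k))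
    (hc0 : c 0 = 0)
    (hc : ∀ m, 1 ≤ m →
      c m = 2 * 2 ^ m - 1 +
        ∑ k ∈ Finset.Icc 1 (m - 1), c k * ((m + 1).choose (m - k) : ℤ)) :
    ∀ m, 1 ≤ m →
      c m = ∑ k ∈ Finset.range m, (2 * 2 ^ (m - k) - 1) * ((m + 1).choose k : ℤ) * B k := by
  intro m
  induction m using Nat.strong_induction_on with
  | _ m IH =>
  intro hm
  rw [hc m hm]
  have hsplit : Finset.range m = insert 0 (Finset.Icc 1 (m - 1)) := by
    ext x; simp [Finset.mem_Icc, Finset.mem_range]; omega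
  rw [hsplit, Finset.sum_insert (by simp)]
  simp only [Nat.sub_zero, Nat.choose_zero_right, Nat.cast_one, mul_one, hB0]
  congr 1
  -- main identity
  calc ∑ j ∈ Finset.Icc 1 (m - 1), c j * ((m + 1).choose (m - j) : ℤ)
      = ∑ j ∈ Finset.Icc 1 (m - 1), ∑ i ∈ Finset.range j,
          (2 * 2 ^ (j - i) - 1) * ((j + 1).choose i : ℤ) * B i * ((m + 1).choose (m - j) : ℤ) := by
        apply Finset.sum_congr rfl
        intro j hj
        simp only [Finset.mem_Icc] at hj
        rw [IH j (by omega) hj.1, Finset.sum_mul]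
    _ = ∑ k ∈ Finset.Icc 1 (m - 1), ∑ r ∈ Finset.Icc 1 k,
          (2 * 2 ^ (m - k) - 1) * ((m + 1).choose k : ℤ) * ((k.choose r : ℤ) * B (k - r)) := by
        rw [Finset.sum_sigma', Finset.sum_sigma']
        apply Finset.sum_nbij' (fun p => ⟨m - p.1 + p.2, m - p.1⟩)
          (fun q => ⟨m - q.2, q.1 - q.2⟩)
        · rintro ⟨j, i⟩ hp
          simp only [Finset.mem_sigma, Finset.mem_Icc, Finset.mem_range] at hp ⊢
          omega
        · rintro ⟨k, r⟩ hq
          simp only [Finset.mem_sigma, Finset.mem_Icc, Finset.mem_range] at hq ⊢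
          omega
        · rintro ⟨j, i⟩ hp
          simp only [Finset.mem_sigma, Finset.mem_Icc, Finset.mem_range] at hp
          simp only [Sigma.mk.inj_iff]
          constructor <;> [omega; (apply heq_of_eq; omega)]
        · rintro ⟨k, r⟩ hq
          simp only [Finset.mem_sigma, Finset.mem_Icc, Finset.mem_range] at hq
          simp only [Sigma.mk.inj_iff]
          constructor <;> [omega; (apply heq_of_eq; omega)]
        · rintro ⟨j, i⟩ hp
          simp only [Finset.mem_sigma, Finset.mem_Icc, Finset.mem_range] at hp
          obtain ⟨⟨hj1, hj2⟩, hij⟩ := hp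
          have h1 : m - (m - j + i) = j - i := by omega
          have h2 : m - j + i - (m - j) = i := by omega
          have h3 : (m - j + i).choose (m - j) = (m - j + i).choose i := by
            have h4 := Nat.choose_symm (Nat.le_add_right (m - j) i)
            rw [show m - j + i - (m - j) = i by omega] at h4; exact h4.symm
          simp only [h1, h2, h3]
          have hcast : ((m + 1).choose (m - j + i) : ℤ) * ((m - j + i).choose i : ℤ)
              = ((j + 1).choose i : ℤ) * ((m + 1).choose (m - j) : ℤ) := by
            exact_mod_cast congrArg (Nat.cast : ℕ → ℤ) (key_choose m i j hij (by omega))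
          linear_combination (1 - 2 * 2 ^ (j - i)) * B i * hcast
    _ = ∑ k ∈ Finset.Icc 1 (m - 1),
          (2 * 2 ^ (m - k) - 1) * ((m + 1).choose k : ℤ) * B k := by
        apply Finset.sum_congr rfl
        intro k hk
        simp only [Finset.mem_Icc] at hk
        rw [hB k hk.1, Finset.mul_sum]
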